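/- Let {aᵢ ⊗ bᵢ : i = 1…d} be an orthonormal product basis of ℂ^{d₁} ⊗ ℂ^{d₂}, d = d₁d₂, with unit vectors aᵢ ∈ ℂ^{d₁}, bᵢ ∈ ℂ^{d₂}. Then for every index κ ∈ {1…d}, the set of vectors {a_κ} ∪ {aᵢ : i ≠ κ and ⟨b_κ, bᵢ⟩ ≠ 0} spans ℂ^{d₁}. In particular, the set I_κ = {i ≠ κ : ⟨b_κ, bᵢ⟩ ≠ 0} contains at least d₁ − 1 elements, and for each i ∈ I_κ one has ⟨a_κ, aᵢ⟩ = 0. -/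

import Mathlib

open scoped ComplexInnerProductSpace

/-- The tensor product of two vectors, realized concretely on `EuclideanSpace`:
`(a ⊗ b) (i, j) = a i * b j`. -/
noncomputable def eprod {ι γ : Type*} (a : EuclideanSpace ℂ ι) (b : EuclideanSpace ℂ γ) :
    EuclideanSpace ℂ (ι × γ) :=
  WithLp.toLp 2 (fun p => a p.1 * b p.2)

/-- The inner product of two elementary tensors is the product of the inner products. -/
lemma inner_eprod {ι γ : Type*} [Fintype ι] [Fintype γ]
    (a c : EuclideanSpace ℂ ι) (b d : EuclideanSpace ℂ γ) :
    ⟪eprod a b, eprod c d⟫ = ⟪a, c⟫ * ⟪b, d⟫ := by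
  simp only [PiLp.inner_apply, RCLike.inner_apply, eprod, WithLp.ofLp_toLp, Fintype.sum_prod_type,
    Finset.sum_mul, Finset.mul_sum, map_mul]
  rw [Finset.sum_comm]
  apply Finset.sum_congr rfl
  intro i _
  apply Finset.sum_congr rfl
  intro j _
  ring

/-- For an orthonormal product basis `{aᵢ ⊗ bᵢ : i = 1…d}` of `ℂ^{d₁} ⊗ ℂ^{d₂}` and any
index `κ`, the set `{a_κ} ∪ {aᵢ : i ≠ κ, ⟨b_κ, bᵢ⟩ ≠ 0}` spans `ℂ^{d₁}`; in particular the
index set `I_κ = {i ≠ κ : ⟨b_κ, bᵢ⟩ ≠ 0}` has at least `d₁ - 1` elements and each of its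
members satisfies `⟨a_κ, aᵢ⟩ = 0`. -/
theorem product_basis_first_factor_span {d₁ d₂ : ℕ} (hd₁ : 0 < d₁) (hd₂ : 0 < d₂)
    (a : Fin (d₁ * d₂) → EuclideanSpace ℂ (Fin d₁))
    (b : Fin (d₁ * d₂) → EuclideanSpace ℂ (Fin d₂))
    (ha : ∀ i, ‖a i‖ = 1) (hb : ∀ i, ‖b i‖ = 1)
    (hB : Orthonormal ℂ (fun i => eprod (a i) (b i)))
    (κ : Fin (d₁ * d₂)) :
    Submodule.span ℂ (insert (a κ) (a '' {i | i ≠ κ ∧ ⟪b κ, b i⟫ ≠ 0})) = ⊤ ∧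
    d₁ - 1 ≤ {i | i ≠ κ ∧ ⟪b κ, b i⟫ ≠ 0}.ncard ∧
    ∀ i, i ≠ κ → ⟪b κ, b i⟫ ≠ 0 → ⟪a κ, a i⟫ = 0 := by
  classical
  set I : Set (Fin (d₁ * d₂)) := {i | i ≠ κ ∧ ⟪b κ, b i⟫ ≠ 0} with hI
  have h3 : ∀ i, i ≠ κ → ⟪b κ, b i⟫ ≠ 0 → ⟪a κ, a i⟫ = 0 := by
    intro i hiκ hbi
    have h : ⟪eprod (a κ) (b κ), eprod (a i) (b i)⟫ = 0 := hB.2 (Ne.symm hiκ)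
    rw [inner_eprod] at h
    exact (mul_eq_zero.1 h).resolve_right hbi
  have hbself : ∀ i, ⟪b i, b i⟫ = 1 := by
    intro i
    rw [@inner_self_eq_norm_sq_to_K ℂ, hb i]
    norm_num
  haveI : Nonempty (Fin (d₁ * d₂)) := ⟨⟨0, Nat.mul_pos hd₁ hd₂⟩⟩
  have hcard : Fintype.card (Fin (d₁ * d₂)) =
      Module.finrank ℂ (EuclideanSpace ℂ (Fin d₁ × Fin d₂)) := by
    simp [finrank_euclideanSpace]
  have htop : Submodule.span ℂ (Set.range (fun i => eprod (a i) (b i))) = ⊤ :=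
    hB.linearIndependent.span_eq_top_of_card_eq_finrank hcard
  have hspan : Submodule.span ℂ (insert (a κ) (a '' I)) = ⊤ := by
    rw [← Submodule.orthogonal_eq_bot_iff]
    rw [Submodule.eq_bot_iff]
    intro v hv
    rw [Submodule.mem_orthogonal] at hv
    have hvS : ∀ u ∈ insert (a κ) (a '' I), ⟪u, v⟫ = 0 := fun u hu =>
      hv u (Submodule.subset_span hu)
    set w : EuclideanSpace ℂ (Fin d₁ × Fin d₂) := eprod v (b κ) with hw
    have hgen : ∀ i, ⟪eprod (a i) (b i), w⟫ = 0 := by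
      intro i
      rw [hw, inner_eprod]
      by_cases hiκ : i = κ
      · subst hiκ
        rw [hvS (a i) (Set.mem_insert _ _), zero_mul]
      · by_cases hb0 : ⟪b κ, b i⟫ = 0
        · rw [← inner_eq_zero_symm] at hb0
          rw [hb0, mul_zero]
        · rw [hvS (a i) (Set.mem_insert_iff.2 (Or.inr ⟨i, ⟨hiκ, hb0⟩, rfl⟩)), zero_mul]
    have hle : Submodule.span ℂ (Set.range (fun i => eprod (a i) (b i))) ≤ (ℂ ∙ w)ᗮ := by
      rw [Submodule.span_le]
      rintro _ ⟨i, rfl⟩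
      rw [SetLike.mem_coe, Submodule.mem_orthogonal_singleton_iff_inner_left]
      exact hgen i
    rw [htop, top_le_iff] at hle
    have hw0 : w = 0 := by
      have : ⟪w, w⟫ = 0 :=
        Submodule.mem_orthogonal_singleton_iff_inner_left.1 (hle ▸ Submodule.mem_top)
      exact inner_self_eq_zero.1 this
    have hvv : ⟪v, v⟫ * ⟪b κ, b κ⟫ = 0 := by
      rw [← inner_eprod, ← hw, hw0, inner_zero_left]
    rw [hbself, mul_one] at hvv
    exact inner_self_eq_zero.1 hvv
  refine ⟨hspan, ?_, h3⟩
  have hfin : I.Finite := Set.toFinite I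
  have hfin2 : (insert (a κ) (a '' I)).Finite := (hfin.image a).insert _
  haveI := hfin2.fintype
  have h1 : Module.finrank ℂ (EuclideanSpace ℂ (Fin d₁)) ≤ (insert (a κ) (a '' I)).ncard := by
    have hle := finrank_span_le_card (R := ℂ) (insert (a κ) (a '' I))
    rw [hspan, finrank_top] at hle
    rwa [Set.ncard_eq_toFinset_card']
  rw [finrank_euclideanSpace, Fintype.card_fin] at h1
  have h2 : (insert (a κ) (a '' I)).ncard ≤ 1 + I.ncard := by
    have hA := Set.ncard_insert_le (a κ) (a '' I)
    have hBc := Set.ncard_image_le (f := a) hfin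
    omega
  omega
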